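/- Suppose y ∈ W^{1,2}(-1,1) minimizes ∫_{-1}^{1}(y'(t))^2 dt subject to y(x) = 1 and ∫_{-1}^{1} t^k y(t) dt = 0 for k = 0,...,m-1, where x ∈ (-1,1). Then there exist a polynomial φ of degree at most m and a constant ζ such that y'(t) = φ(t) + ζ·χ_{(-1,x)}(t) almost everywhere on (-1,1), and y'(−1) = y'(1) = 0 in the sense that φ(-1) + ζ = 0 and φ(1) = 0. -/

import Mathlib

open MeasureTheory intervalIntegral Set Polynomial


noncomputable def Ik (k : ℕ) : ℝ := (1 - (-1:ℝ) ^ (k+1)) / (k+1)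

noncomputable def qf (x : ℝ) (k : ℕ) (t : ℝ) : ℝ :=
  (1 - t ^ (k+1)) / (k+1) - Ik k * (if t ∈ Set.Ioo (-1:ℝ) x then 1 else 0)

noncomputable def Pa (m : ℕ) (α : Fin m → ℝ) : Polynomial ℝ :=
  ∑ i : Fin m, Polynomial.C (α i / ((i:ℕ)+1)) * (1 - Polynomial.X ^ ((i:ℕ)+1))

lemma Pa_eval (m : ℕ) (α : Fin m → ℝ) (t : ℝ) :
    (Pa m α).eval t = ∑ i : Fin m, α i * ((1 - t ^ ((i:ℕ)+1)) / ((i:ℕ)+1)) := by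
  unfold Pa
  rw [Polynomial.eval_finset_sum]
  congr 1; funext i
  simp [div_mul_eq_mul_div, mul_div_assoc, mul_comm]

lemma Pa_coeff (m : ℕ) (α : Fin m → ℝ) (i : Fin m) :
    (Pa m α).coeff ((i:ℕ)+1) = -(α i / ((i:ℕ)+1)) := by
  unfold Pa
  rw [Polynomial.finset_sum_coeff]
  have h : ∀ j : Fin m, (Polynomial.C (α j / ((j:ℕ)+1)) * (1 - Polynomial.X ^ ((j:ℕ)+1))).coeff ((i:ℕ)+1)
      = if j = i then -(α i / ((i:ℕ)+1)) else 0 := by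
    intro j
    rw [Polynomial.coeff_C_mul, Polynomial.coeff_sub, Polynomial.coeff_one, Polynomial.coeff_X_pow]
    by_cases hji : j = i
    · subst hji; simp
    · have h1 : ¬((j:ℕ)+1 = (i:ℕ)+1) := fun h => hji (Fin.ext (Nat.succ_injective h))
      have h2 : ¬((i:ℕ) = (j:ℕ)) := fun h => hji (Fin.ext h.symm)
      have h3 : ¬((j:ℕ) = (i:ℕ)) := fun h => hji (Fin.ext h)
      simp [h1, hji, h2, h3]
  simp only [h]
  simp

lemma alpha_zero (m : ℕ) (x : ℝ) (hx : x ∈ Set.Ioo (-1:ℝ) 1) (α : Fin m → ℝ)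
    (h : ∀ᵐ t ∂(volume.restrict (Set.Ioc (-1:ℝ) 1)), ∑ i : Fin m, α i * qf x (i:ℕ) t = 0) :
    α = 0 := by
  have hsub : Set.Ioc x 1 ⊆ Set.Ioc (-1:ℝ) 1 := Set.Ioc_subset_Ioc_left hx.1.le
  have h2 : ∀ᵐ t ∂(volume.restrict (Set.Ioc x 1)), ∑ i : Fin m, α i * qf x (i:ℕ) t = 0 :=
    ae_restrict_of_ae_restrict_of_subset hsub h
  have h3 : ∀ᵐ t ∂(volume.restrict (Set.Ioc x 1)), (Pa m α).eval t = 0 := by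
    rw [MeasureTheory.ae_restrict_iff' measurableSet_Ioc] at h2 ⊢
    filter_upwards [h2] with t ht2
    intro ht
    have hchi : t ∉ Set.Ioo (-1:ℝ) x := fun hc => absurd hc.2 (not_lt.2 ht.1.le)
    have := ht2 ht
    rw [Pa_eval]
    rw [← this]
    congr 1; funext i
    unfold qf
    simp [hchi]
  -- the zero set is infinite
  have hZ : {t : ℝ | (Pa m α).IsRoot t}.Infinite := by
    by_contra hfin
    rw [Set.not_infinite] at hfin
    have hnull : volume {t : ℝ | (Pa m α).IsRoot t} = 0 := hfin.measure_zero _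
    rw [MeasureTheory.ae_restrict_iff' measurableSet_Ioc] at h3
    have hnull2 : volume {t : ℝ | ¬ (t ∈ Set.Ioc x 1 → (Pa m α).eval t = 0)} = 0 :=
      MeasureTheory.ae_iff.mp h3
    have hle : volume (Set.Ioc x 1) ≤ volume {t : ℝ | (Pa m α).IsRoot t} + volume {t : ℝ | ¬ (t ∈ Set.Ioc x 1 → (Pa m α).eval t = 0)} := by
      apply le_trans (measure_mono ?_) (measure_union_le _ _)
      intro t ht
      by_cases hroot : (Pa m α).eval t = 0
      · exact Or.inl hroot
      · exact Or.inr (fun hc => hroot (hc ht))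
    rw [hnull, hnull2, add_zero] at hle
    have hxx : volume (Set.Ioc x 1) = 0 := le_antisymm hle zero_le
    rw [Real.volume_Ioc, ENNReal.ofReal_eq_zero] at hxx
    linarith [hx.2]
  have hP0 : Pa m α = 0 := Polynomial.eq_zero_of_infinite_isRoot _ hZ
  funext i
  have := Pa_coeff m α i
  rw [hP0] at this
  simp only [Polynomial.coeff_zero] at this
  have hne : ((i:ℕ):ℝ) + 1 ≠ 0 := by positivity
  have : α i / ((i:ℕ)+1) = 0 := by linarith [this]
  field_simp at this
  simpa using this

lemma quad_zero {D N : ℝ} (hN : 0 ≤ N) (h : ∀ ε : ℝ, 0 ≤ 2*ε*D + ε^2*N) : D = 0 := by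
  have hN1 : (0:ℝ) < N + 1 := by linarith
  set u := D / (N+1) with hu
  have hD : D = u * (N+1) := by rw [hu, div_mul_cancel₀ _ hN1.ne']
  have h1 := h (-u)
  rw [hD] at h1
  have hu2 : u^2 * (N+2) ≤ 0 := by nlinarith [h1]
  have hu0 : u = 0 := by nlinarith [sq_nonneg u]
  rw [hD, hu0, zero_mul]

lemma fubini_primitive (v : ℝ → ℝ) (hv : IntegrableOn v (Set.Ioc (-1:ℝ) 1)) (k : ℕ) :
    (∫ t in (-1:ℝ)..1, t ^ k * (∫ s in (-1:ℝ)..t, v s))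
      = ∫ s in (-1:ℝ)..1, v s * ((1 - s ^ (k+1)) / (k+1)) := by
  have h11 : (-1:ℝ) ≤ 1 := by norm_num
  set μ := volume.restrict (Set.Ioc (-1:ℝ) 1) with hμ
  have htk : Integrable (fun t : ℝ => t ^ k) μ := (continuous_pow k).integrableOn_Ioc
  have hG : Integrable (fun p : ℝ × ℝ => p.1 ^ k * v p.2) (μ.prod μ) :=
    Integrable.mul_prod htk hv
  have hs : MeasurableSet {p : ℝ × ℝ | p.2 ≤ p.1} :=
    measurableSet_le measurable_snd measurable_fst
  have hF : Integrable (fun p : ℝ × ℝ => if p.2 ≤ p.1 then p.1 ^ k * v p.2 else 0) (μ.prod μ) := by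
    have := hG.indicator hs
    refine this.congr (Filter.Eventually.of_forall fun p => ?_)
    simp only [Set.indicator, Set.mem_setOf_eq]
  have swap := MeasureTheory.integral_integral_swap
    (f := fun t s : ℝ => if s ≤ t then t ^ k * v s else 0) (μ := μ) (ν := μ) hF
  -- LHS of swap equals LHS of goal
  have hL : (∫ t, ∫ s, (if s ≤ t then t ^ k * v s else 0) ∂μ ∂μ)
      = ∫ t in (-1:ℝ)..1, t ^ k * (∫ s in (-1:ℝ)..t, v s) := by
    rw [intervalIntegral.integral_of_le h11]
    apply setIntegral_congr_fun measurableSet_Ioc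
    intro t ht
    dsimp only
    have : (fun s => if s ≤ t then t ^ k * v s else 0)
        = Set.indicator (Set.Iic t) (fun s => t ^ k * v s) := by
      funext s; simp [Set.indicator, Set.mem_Iic]
    rw [this, MeasureTheory.integral_indicator measurableSet_Iic, hμ, Measure.restrict_restrict measurableSet_Iic]
    have hset : Set.Iic t ∩ Set.Ioc (-1:ℝ) 1 = Set.Ioc (-1) t := by
      ext s; simp only [Set.mem_inter_iff, Set.mem_Iic, Set.mem_Ioc]
      constructor
      · rintro ⟨h1, h2, h3⟩; exact ⟨h2, h1⟩
      · rintro ⟨h1, h2⟩; exact ⟨h2, h1, h2.trans ht.2⟩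
    rw [hset, MeasureTheory.integral_const_mul, intervalIntegral.integral_of_le ht.1.le]
  -- RHS of swap equals RHS of goal
  have hR : (∫ s, ∫ t, (if s ≤ t then t ^ k * v s else 0) ∂μ ∂μ)
      = ∫ s in (-1:ℝ)..1, v s * ((1 - s ^ (k+1)) / (k+1)) := by
    rw [intervalIntegral.integral_of_le h11]
    apply setIntegral_congr_fun measurableSet_Ioc
    intro s hs'
    dsimp only
    have : (fun t => if s ≤ t then t ^ k * v s else 0)
        = Set.indicator (Set.Ici s) (fun t => t ^ k * v s) := by
      funext t; simp [Set.indicator, Set.mem_Ici]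
    rw [this, MeasureTheory.integral_indicator measurableSet_Ici, hμ, Measure.restrict_restrict measurableSet_Ici]
    have hset : Set.Ici s ∩ Set.Ioc (-1:ℝ) 1 = Set.Icc s 1 := by
      ext t; simp only [Set.mem_inter_iff, Set.mem_Ici, Set.mem_Ioc, Set.mem_Icc]
      constructor
      · rintro ⟨h1, _, h3⟩; exact ⟨h1, h3⟩
      · rintro ⟨h1, h2⟩; exact ⟨h1, hs'.1.trans_le h1, h2⟩
    rw [hset, MeasureTheory.integral_Icc_eq_integral_Ioc]
    have : ∫ t in Set.Ioc s 1, t ^ k * v s = (∫ t in s..(1:ℝ), t ^ k) * v s := by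
      rw [intervalIntegral.integral_of_le hs'.2, ← MeasureTheory.integral_mul_const]
    rw [this, integral_pow]
    ring
  rw [← hL, swap, hR]

lemma qf_measurable (x : ℝ) (k : ℕ) : Measurable (qf x k) := by
  unfold qf
  apply Measurable.sub
  · exact ((measurable_const.sub (measurable_id.pow_const _)).div measurable_const)
  · exact measurable_const.mul (Measurable.ite measurableSet_Ioo measurable_const measurable_const)

lemma Ik_bound (k : ℕ) : |Ik k| ≤ 2 := by
  unfold Ik
  rw [abs_div]
  have h1 : |1 - (-1:ℝ)^(k+1)| ≤ 2 := by
    rcases neg_one_pow_eq_or ℝ (k+1) with h | h <;> rw [h] <;> norm_num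
  have h2 : (1:ℝ) ≤ |((k:ℝ)+1)| := by
    rw [abs_of_pos (by positivity)]; exact le_add_of_nonneg_left (Nat.cast_nonneg k)
  calc |1 - (-1:ℝ)^(k+1)| / |((k:ℝ)+1)| ≤ |1 - (-1:ℝ)^(k+1)| / 1 := by
        apply div_le_div_of_nonneg_left (abs_nonneg _) one_pos h2
    _ ≤ 2 := by rwa [div_one]

lemma qf_bound (x : ℝ) (k : ℕ) {t : ℝ} (ht : |t| ≤ 1) : |qf x k t| ≤ 4 := by
  unfold qf
  have h1 : |(1 - t ^ (k+1)) / ((k:ℝ)+1)| ≤ 2 := by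
    rw [abs_div]
    have ht' : |t ^ (k+1)| ≤ 1 := by
      rw [abs_pow]; exact pow_le_one₀ (abs_nonneg t) ht
    have h2 : (1:ℝ) ≤ |((k:ℝ)+1)| := by
      rw [abs_of_pos (by positivity)]; exact le_add_of_nonneg_left (Nat.cast_nonneg k)
    calc |1 - t^(k+1)| / |((k:ℝ)+1)| ≤ |1 - t^(k+1)| / 1 :=
          div_le_div_of_nonneg_left (abs_nonneg _) one_pos h2
      _ = |1 - t^(k+1)| := div_one _
      _ ≤ |(1:ℝ)| + |t^(k+1)| := abs_sub _ _
      _ ≤ 2 := by rw [abs_one]; linarith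
  have h2 : |Ik k * (if t ∈ Set.Ioo (-1:ℝ) x then 1 else 0)| ≤ 2 := by
    rw [abs_mul]
    have : |(if t ∈ Set.Ioo (-1:ℝ) x then (1:ℝ) else 0)| ≤ 1 := by
      split <;> simp
    calc |Ik k| * _ ≤ 2 * 1 := mul_le_mul (Ik_bound k) this (abs_nonneg _) (by norm_num)
      _ = 2 := by norm_num
  have h3 := abs_sub ((1 - t ^ (k+1)) / ((k:ℝ)+1)) (Ik k * (if t ∈ Set.Ioo (-1:ℝ) x then 1 else 0))
  push_cast at h1 h3 ⊢
  linarith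

/-- `W12 y g` : `y` is absolutely continuous on `[-1,1]` with derivative `g ∈ L²(-1,1)`. -/
def W12 (y g : ℝ → ℝ) : Prop :=
  IntervalIntegrable g MeasureTheory.volume (-1) 1 ∧
  IntervalIntegrable (fun t => g t ^ 2) MeasureTheory.volume (-1) 1 ∧
  ∀ t ∈ Set.Icc (-1 : ℝ) 1, y t = y (-1) + ∫ s in (-1 : ℝ)..t, g s

theorem optimality_condition (m : ℕ) (hm : 1 ≤ m) (x : ℝ) (hx : x ∈ Set.Ioo (-1:ℝ) 1)
    (y g : ℝ → ℝ) (hW : W12 y g) (hyx : y x = 1)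
    (hmom : ∀ k < m, (∫ t in (-1:ℝ)..1, t ^ k * y t) = 0)
    (hmin : ∀ z h : ℝ → ℝ, W12 z h → z x = 1 →
      (∀ k < m, (∫ t in (-1:ℝ)..1, t ^ k * z t) = 0) →
      (∫ t in (-1:ℝ)..1, (g t) ^ 2) ≤ ∫ t in (-1:ℝ)..1, (h t) ^ 2) :
    ∃ (φ : Polynomial ℝ) (ζ : ℝ), φ.natDegree ≤ m ∧
      (∀ᵐ t ∂(MeasureTheory.volume.restrict (Set.Ioo (-1:ℝ) 1)),
        g t = φ.eval t + ζ * (if t ∈ Set.Ioo (-1:ℝ) x then 1 else 0)) ∧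
      φ.eval (-1) + ζ = 0 ∧ φ.eval 1 = 0 := by
  obtain ⟨hg1, hg2, hgAC⟩ := hW
  have h11 : (-1:ℝ) ≤ 1 := by norm_num
  set μ := volume.restrict (Set.Ioc (-1:ℝ) 1) with hμdef
  -- basic integrability facts
  have hvolJ : volume (Set.Ioc (-1:ℝ) 1) < ⊤ := by
    rw [Real.volume_Ioc]; exact ENNReal.ofReal_lt_top
  have hconst : ∀ C : ℝ, Integrable (fun _ : ℝ => C) μ := by
    intro C
    rw [hμdef]
    exact integrableOn_const hvolJ.ne
  have habs : ∀ t ∈ Set.Ioc (-1:ℝ) 1, |t| ≤ 1 := by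
    intro t ht; rw [abs_le]; exact ⟨ht.1.le, ht.2⟩
  have hqbd : ∀ k : ℕ, ∀ᵐ t ∂μ, ‖qf x k t‖ ≤ 4 := by
    intro k
    rw [hμdef, ae_restrict_iff' measurableSet_Ioc]
    exact Filter.Eventually.of_forall fun t ht =>
      by rw [Real.norm_eq_abs]; exact qf_bound x k (habs t ht)
  have hqint : ∀ k : ℕ, Integrable (qf x k) μ := fun k =>
    Integrable.mono' (hconst 4) (qf_measurable x k).aestronglyMeasurable (hqbd k)
  have hgJ : Integrable g μ := by
    rw [hμdef]; exact (intervalIntegrable_iff_integrableOn_Ioc_of_le h11).1 hg1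
  have hg2J : Integrable (fun t => g t ^ 2) μ := by
    rw [hμdef]; exact (intervalIntegrable_iff_integrableOn_Ioc_of_le h11).1 hg2
  have hqg : ∀ k : ℕ, Integrable (fun t => qf x k t * g t) μ := fun k =>
    hgJ.bdd_mul (qf_measurable x k).aestronglyMeasurable (hqbd k)
  have hqq : ∀ k l : ℕ, Integrable (fun t => qf x k t * qf x l t) μ := fun k l =>
    (hqint l).bdd_mul (qf_measurable x k).aestronglyMeasurable (hqbd k)
  -- Gram matrix and inner products
  set G : Matrix (Fin m) (Fin m) ℝ :=
    Matrix.of fun i j : Fin m => ∫ t, qf x i t * qf x j t ∂μ with hGdef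
  set b : Fin m → ℝ := fun i => ∫ t, qf x i t * g t ∂μ with hbdef
  have hGapp : ∀ i j : Fin m, G i j = ∫ t, qf x i t * qf x j t ∂μ := fun i j => rfl
  -- quadratic form identity
  have hquad : ∀ β : Fin m → ℝ,
      dotProduct β (G.mulVec β) = ∫ t, (∑ i : Fin m, β i * qf x i t) ^ 2 ∂μ := by
    intro β
    have hexp : (fun t => (∑ i : Fin m, β i * qf x i t) ^ 2)
        = fun t => ∑ i : Fin m, ∑ j : Fin m, (β i * β j) * (qf x i t * qf x j t) := by
      funext t
      rw [sq, Finset.sum_mul_sum]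
      exact Finset.sum_congr rfl fun i _ => Finset.sum_congr rfl fun j _ => by ring
    have hdouble : (∫ t, ∑ i : Fin m, ∑ j : Fin m, (β i * β j) * (qf x (i:ℕ) t * qf x (j:ℕ) t) ∂μ)
        = ∑ i : Fin m, ∑ j : Fin m, (β i * β j) * G i j := by
      rw [integral_finset_sum
        (f := fun (i : Fin m) (t : ℝ) => ∑ j : Fin m, (β i * β j) * (qf x (i:ℕ) t * qf x (j:ℕ) t))
        Finset.univ
        (fun i _ => integrable_finset_sum (μ := μ) _ fun j _ => ((hqq i j).const_mul _))]
      apply Finset.sum_congr rfl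
      intro i _
      rw [integral_finset_sum
        (f := fun (j : Fin m) (t : ℝ) => (β i * β j) * (qf x (i:ℕ) t * qf x (j:ℕ) t))
        Finset.univ (fun j _ => ((hqq i j).const_mul _))]
      apply Finset.sum_congr rfl
      intro j _
      rw [MeasureTheory.integral_const_mul, hGapp]
    rw [hexp, hdouble]
    simp only [dotProduct, Matrix.mulVec]
    exact Finset.sum_congr rfl fun i _ => by
      rw [Finset.mul_sum]; exact Finset.sum_congr rfl fun j _ => by ring
  -- kernel of G is trivial
  have hker : ∀ β : Fin m → ℝ, G.mulVec β = 0 → β = 0 := by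
    intro β hβ
    have h0 : (∫ t, (∑ i : Fin m, β i * qf x i t) ^ 2 ∂μ) = 0 := by
      rw [← hquad, hβ, dotProduct_zero]
    have hint : Integrable (fun t => (∑ i : Fin m, β i * qf x i t) ^ 2) μ := by
      have hexp : (fun t => (∑ i : Fin m, β i * qf x i t) ^ 2)
          = fun t => ∑ i : Fin m, ∑ j : Fin m, (β i * β j) * (qf x i t * qf x j t) := by
        funext t
        rw [sq, Finset.sum_mul_sum]
        exact Finset.sum_congr rfl fun i _ => Finset.sum_congr rfl fun j _ => by ring
      rw [hexp]
      exact integrable_finset_sum _ fun i _ =>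
        integrable_finset_sum _ fun j _ => ((hqq i j).const_mul _)
    have hae := (integral_eq_zero_iff_of_nonneg_ae
      (Filter.Eventually.of_forall fun t => sq_nonneg _) hint).1 h0
    apply alpha_zero m x hx β
    rw [← hμdef]
    filter_upwards [hae] with t ht
    exact sq_eq_zero_iff.mp ht
  have hunit : IsUnit G.det := by
    rw [← Matrix.isUnit_iff_isUnit_det]
    rw [← Matrix.mulVec_injective_iff_isUnit]
    intro a b hab
    have h0 : G.mulVec (a - b) = 0 := by
      rw [Matrix.mulVec_sub, hab, sub_self]
    have := hker _ h0
    exact sub_eq_zero.1 this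
  -- the coefficients
  set α : Fin m → ℝ := G⁻¹.mulVec b with hαdef
  have hGα : G.mulVec α = b := by
    rw [hαdef, Matrix.mulVec_mulVec, Matrix.mul_nonsing_inv _ hunit, Matrix.one_mulVec]
  set Q : ℝ → ℝ := fun t => ∑ i : Fin m, α i * qf x (i : ℕ) t with hQdef
  set v : ℝ → ℝ := fun t => g t - Q t with hvdef
  have hQmeas : Measurable Q := by
    apply Finset.measurable_sum
    exact fun i _ => (qf_measurable x i).const_mul _
  have hQbd : ∀ᵐ t ∂μ, ‖Q t‖ ≤ ∑ i : Fin m, |α i| * 4 := by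
    rw [hμdef, ae_restrict_iff' measurableSet_Ioc]
    apply Filter.Eventually.of_forall
    intro t ht
    calc ‖Q t‖ ≤ ∑ i : Fin m, ‖α i * qf x (i:ℕ) t‖ := norm_sum_le _ _
      _ ≤ ∑ i : Fin m, |α i| * 4 := by
          apply Finset.sum_le_sum
          intro i _
          rw [Real.norm_eq_abs, abs_mul]
          exact mul_le_mul_of_nonneg_left (qf_bound x i (habs t ht)) (abs_nonneg _)
  have hQJ : Integrable Q μ := integrable_finset_sum _ fun i _ => ((hqint i).const_mul _)
  have hvJ : Integrable v μ := hgJ.sub hQJ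
  have hv1 : IntervalIntegrable v volume (-1) 1 := by
    rw [intervalIntegrable_iff_integrableOn_Ioc_of_le h11]; rw [hμdef] at hvJ; exact hvJ
  have hQgJ : Integrable (fun t => Q t * g t) μ :=
    hgJ.bdd_mul hQmeas.aestronglyMeasurable hQbd
  have hQQJ : Integrable (fun t => Q t * Q t) μ :=
    hQJ.bdd_mul hQmeas.aestronglyMeasurable hQbd
  have hv2J : Integrable (fun t => v t ^ 2) μ := by
    have : (fun t => v t ^ 2)
        = fun t => g t ^ 2 + ((-2) * (Q t * g t) + Q t * Q t) := by
      funext t; simp only [hvdef]; ring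
    rw [this]
    exact hg2J.add (((hQgJ).const_mul _).add hQQJ)
  have hgv : Integrable (fun t => g t * v t) μ := by
    have : (fun t => g t * v t) = fun t => g t ^ 2 + (-1) * (Q t * g t) := by
      funext t; simp only [hvdef]; ring
    rw [this]
    exact hg2J.add ((hQgJ).const_mul _)
  have hqv : ∀ k : ℕ, Integrable (fun t => qf x k t * v t) μ := fun k =>
    hvJ.bdd_mul (qf_measurable x k).aestronglyMeasurable (hqbd k)
  -- orthogonality of v to each qf
  have hQv : ∀ i : Fin m, (∫ t, qf x (i:ℕ) t * v t ∂μ) = 0 := by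
    intro i
    have hsplit : (fun t => qf x (i:ℕ) t * v t)
        = fun t => qf x (i:ℕ) t * g t - ∑ j : Fin m, α j * (qf x (i:ℕ) t * qf x (j:ℕ) t) := by
      funext t
      simp only [hvdef, hQdef, mul_sub, Finset.mul_sum]
      congr 1
      exact Finset.sum_congr rfl fun j _ => by ring
    rw [hsplit, integral_sub (f := fun t => qf x (i:ℕ) t * g t)
      (g := fun t => ∑ j : Fin m, α j * (qf x (i:ℕ) t * qf x (j:ℕ) t))
      (hqg i) (integrable_finset_sum _ fun j _ => ((hqq i j).const_mul _))]
    rw [integral_finset_sum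
      (f := fun (j : Fin m) (t : ℝ) => α j * (qf x (i:ℕ) t * qf x (j:ℕ) t))
      Finset.univ (fun j _ => ((hqq i j).const_mul _))]
    have : ∑ j : Fin m, (∫ t, α j * (qf x (i:ℕ) t * qf x (j:ℕ) t) ∂μ)
        = ∑ j : Fin m, G i j * α j := by
      exact Finset.sum_congr rfl fun j _ => by rw [MeasureTheory.integral_const_mul, hGapp]; ring
    rw [this]
    have hb : b i = ∫ t, qf x (i:ℕ) t * g t ∂μ := rfl
    have hmv : ∑ j : Fin m, G i j * α j = b i := by
      have := congrFun hGα i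
      simpa [Matrix.mulVec, dotProduct] using this
    rw [hmv, ← hb, sub_self]
  -- v · χ and primitive facts
  have hchi : (∫ t, v t * (if t ∈ Set.Ioo (-1:ℝ) x then 1 else 0) ∂μ)
      = ∫ s in (-1:ℝ)..x, v s := by
    have : (fun t => v t * (if t ∈ Set.Ioo (-1:ℝ) x then 1 else 0))
        = Set.indicator (Set.Ioo (-1:ℝ) x) v := by
      funext t
      by_cases ht : t ∈ Set.Ioo (-1:ℝ) x <;> simp [Set.indicator, ht]
    rw [this, MeasureTheory.integral_indicator measurableSet_Ioo, hμdef,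
      Measure.restrict_restrict measurableSet_Ioo]
    have hset : Set.Ioo (-1:ℝ) x ∩ Set.Ioc (-1:ℝ) 1 = Set.Ioo (-1:ℝ) x := by
      apply Set.inter_eq_left.2
      intro t ht
      exact ⟨ht.1, le_of_lt (lt_of_lt_of_le ht.2 hx.2.le)⟩
    rw [hset, ← MeasureTheory.integral_Ioc_eq_integral_Ioo,
      intervalIntegral.integral_of_le hx.1.le]
  -- the key variational inequality
  set D : ℝ := ∫ t in (-1:ℝ)..1, g t * v t with hDdef
  set N : ℝ := ∫ t in (-1:ℝ)..1, v t ^ 2 with hNdef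
  have hDJ : D = ∫ t, g t * v t ∂μ := by
    rw [hDdef, intervalIntegral.integral_of_le h11, hμdef]
  have hNJ : N = ∫ t, v t ^ 2 ∂μ := by
    rw [hNdef, intervalIntegral.integral_of_le h11, hμdef]
  have key : ∀ ε : ℝ, 0 ≤ 2 * ε * D + ε ^ 2 * N := by
    intro ε
    set c0 : ℝ := -(∫ s in (-1:ℝ)..x, v s) with hc0def
    set Wf : ℝ → ℝ := fun t => ∫ s in (-1:ℝ)..t, v s with hWfdef
    have hWcont : ContinuousOn Wf (Set.uIcc (-1:ℝ) 1) :=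
      continuousOn_primitive_interval' hv1 left_mem_uIcc
    set z : ℝ → ℝ := fun t => y t + ε * (c0 + Wf t) with hzdef
    set h : ℝ → ℝ := fun t => g t + ε * v t with hhdef
    have hhJ : Integrable h μ := hgJ.add (hvJ.const_mul ε)
    have hh1 : IntervalIntegrable h volume (-1) 1 := by
      rw [intervalIntegrable_iff_integrableOn_Ioc_of_le h11]; rw [hμdef] at hhJ; exact hhJ
    have hh2J : Integrable (fun t => h t ^ 2) μ := by
      have : (fun t => h t ^ 2)
          = fun t => g t ^ 2 + ((2 * ε) * (g t * v t) + ε ^ 2 * v t ^ 2) := by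
        funext t; simp only [hhdef]; ring
      rw [this]
      exact hg2J.add ((hgv.const_mul _).add (hv2J.const_mul _))
    have hh2 : IntervalIntegrable (fun t => h t ^ 2) volume (-1) 1 := by
      rw [intervalIntegrable_iff_integrableOn_Ioc_of_le h11]; rw [hμdef] at hh2J; exact hh2J
    have hzW12 : W12 z h := by
      refine ⟨hh1, hh2, ?_⟩
      intro t ht
      have hsub : Set.uIcc (-1:ℝ) t ⊆ Set.uIcc (-1:ℝ) 1 :=
        Set.uIcc_subset_uIcc left_mem_uIcc (by rw [Set.uIcc_of_le h11]; exact ht)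
      have hgt : IntervalIntegrable g volume (-1) t := hg1.mono_set hsub
      have hvt : IntervalIntegrable v volume (-1) t := hv1.mono_set hsub
      have hint : (∫ s in (-1:ℝ)..t, h s) = (∫ s in (-1:ℝ)..t, g s) + ε * ∫ s in (-1:ℝ)..t, v s := by
        rw [hhdef]
        rw [intervalIntegral.integral_add hgt (hvt.const_mul ε)]
        rw [intervalIntegral.integral_const_mul]
      have hy := hgAC t ht
      have hz1 : z (-1) = y (-1) + ε * (c0 + 0) := by
        simp only [hzdef, hWfdef, intervalIntegral.integral_same]
      simp only [hzdef, hWfdef] at *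
      rw [hint, hy, hz1]
      ring
    have hzx : z x = 1 := by
      simp only [hzdef, hyx, hWfdef, hc0def]
      ring
    have hzmom : ∀ k < m, (∫ t in (-1:ℝ)..1, t ^ k * z t) = 0 := by
      intro k hk
      -- integrability of pieces
      have hY : ContinuousOn (fun t => t ^ k * (y (-1) + ∫ s in (-1:ℝ)..t, g s))
          (Set.uIcc (-1:ℝ) 1) :=
        (continuous_pow k).continuousOn.mul
          (continuousOn_const.add (continuousOn_primitive_interval' hg1 left_mem_uIcc))
      have int1 : IntervalIntegrable (fun t => t ^ k * y t) volume (-1) 1 := by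
        have h0 : IntervalIntegrable (fun t => t ^ k * (y (-1) + ∫ s in (-1:ℝ)..t, g s))
            volume (-1) 1 := hY.intervalIntegrable
        rw [intervalIntegrable_iff_integrableOn_Ioc_of_le h11] at h0 ⊢
        apply h0.congr_fun ?_ measurableSet_Ioc
        intro t ht
        dsimp only
        rw [← hgAC t ⟨ht.1.le, ht.2⟩]
      have hcW : ContinuousOn (fun t => t ^ k * (c0 + Wf t)) (Set.uIcc (-1:ℝ) 1) :=
        (continuous_pow k).continuousOn.mul (continuousOn_const.add hWcont)
      have int2 : IntervalIntegrable (fun t => t ^ k * (c0 + Wf t)) volume (-1) 1 :=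
        hcW.intervalIntegrable
      have e1 : (fun t => t ^ k * z t)
          = fun t => t ^ k * y t + ε * (t ^ k * (c0 + Wf t)) := by
        funext t; simp only [hzdef]; ring
      rw [e1, intervalIntegral.integral_add int1 (int2.const_mul ε),
        intervalIntegral.integral_const_mul, hmom k hk, zero_add]
      -- now compute the inner integral
      have e2 : (fun t => t ^ k * (c0 + Wf t))
          = fun t => c0 * t ^ k + t ^ k * Wf t := by
        funext t; ring
      have intpow : IntervalIntegrable (fun t : ℝ => c0 * t ^ k) volume (-1) 1 :=
        (continuousOn_const.mul (continuous_pow k).continuousOn).intervalIntegrable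
      have intW : IntervalIntegrable (fun t => t ^ k * Wf t) volume (-1) 1 :=
        ((continuous_pow k).continuousOn.mul hWcont).intervalIntegrable
      rw [e2, intervalIntegral.integral_add intpow intW]
      have hIk : (∫ t in (-1:ℝ)..1, c0 * t ^ k) = c0 * Ik k := by
        rw [intervalIntegral.integral_const_mul, integral_pow]
        unfold Ik
        norm_num
      have hvJ' : IntegrableOn v (Set.Ioc (-1:ℝ) 1) volume := by rw [hμdef] at hvJ; exact hvJ
      have hfub := fubini_primitive v hvJ' k
      rw [hIk, hfub]
      -- relate to the orthogonality relation
      have horth := hQv ⟨k, hk⟩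
      have hsplit2 : (fun t => qf x k t * v t)
          = fun t => ((1 - t ^ (k+1)) / ((k:ℝ)+1)) * v t
            - Ik k * ((if t ∈ Set.Ioo (-1:ℝ) x then 1 else 0) * v t) := by
        funext t; unfold qf; push_cast; ring
      have hint1 : Integrable (fun t => ((1 - t ^ (k+1)) / ((k:ℝ)+1)) * v t) μ := by
        refine hvJ.bdd_mul (c := 4) ?_ ?_
        · exact ((measurable_const.sub (measurable_id.pow_const _)).div
            measurable_const).aestronglyMeasurable
        · rw [hμdef, ae_restrict_iff' measurableSet_Ioc]
          apply Filter.Eventually.of_forall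
          intro t ht
          rw [Real.norm_eq_abs, abs_div]
          have ht' : |t ^ (k+1)| ≤ 1 := by
            rw [abs_pow]; exact pow_le_one₀ (abs_nonneg t) (habs t ht)
          have h2 : (1:ℝ) ≤ |((k:ℝ)+1)| := by
            rw [abs_of_pos (by positivity)]; exact le_add_of_nonneg_left (Nat.cast_nonneg k)
          calc |1 - t^(k+1)| / |((k:ℝ)+1)| ≤ |1 - t^(k+1)| / 1 :=
                div_le_div_of_nonneg_left (abs_nonneg _) one_pos h2
            _ = |1 - t^(k+1)| := div_one _
            _ ≤ |(1:ℝ)| + |t^(k+1)| := abs_sub _ _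
            _ ≤ 4 := by rw [abs_one]; linarith
      have hint2 : Integrable (fun t => (if t ∈ Set.Ioo (-1:ℝ) x then (1:ℝ) else 0) * v t) μ := by
        refine hvJ.bdd_mul (c := 1) ?_ ?_
        · exact (Measurable.ite measurableSet_Ioo measurable_const
            measurable_const).aestronglyMeasurable
        · apply Filter.Eventually.of_forall
          intro t
          rw [Real.norm_eq_abs]
          split <;> simp
      rw [hsplit2, integral_sub hint1 (hint2.const_mul _)] at horth
      rw [MeasureTheory.integral_const_mul] at horth
      have hc2 : (∫ t, (if t ∈ Set.Ioo (-1:ℝ) x then (1:ℝ) else 0) * v t ∂μ) = -c0 := by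
        rw [hc0def, neg_neg, ← hchi]
        congr 1; funext t; ring
      rw [hc2] at horth
      have hfc : (∫ s in (-1:ℝ)..1, v s * ((1 - s ^ (k+1)) / ((k:ℝ)+1)))
          = ∫ t, ((1 - t ^ (k+1)) / ((k:ℝ)+1)) * v t ∂μ := by
        rw [intervalIntegral.integral_of_le h11, hμdef]
        congr 1; funext s; ring
      rw [hfc]
      -- from horth : ∫ poly*v - Ik k * (-c0) = 0
      have : (∫ t, ((1 - t ^ (k+1)) / ((k:ℝ)+1)) * v t ∂μ) = - (Ik k * c0) := by
        linarith [horth]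
      rw [this]
      ring
    -- apply minimality
    have hobj := hmin z h hzW12 hzx hzmom
    have hexp : (∫ t in (-1:ℝ)..1, h t ^ 2)
        = (∫ t in (-1:ℝ)..1, g t ^ 2) + (2 * ε * D + ε ^ 2 * N) := by
      have e3 : (fun t => h t ^ 2)
          = fun t => g t ^ 2 + ((2 * ε) * (g t * v t) + ε ^ 2 * v t ^ 2) := by
        funext t; simp only [hhdef]; ring
      have i1 : IntervalIntegrable (fun t => g t * v t) volume (-1) 1 := by
        rw [intervalIntegrable_iff_integrableOn_Ioc_of_le h11]; rw [hμdef] at hgv; exact hgv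
      have i2 : IntervalIntegrable (fun t => v t ^ 2) volume (-1) 1 := by
        rw [intervalIntegrable_iff_integrableOn_Ioc_of_le h11]; rw [hμdef] at hv2J; exact hv2J
      rw [e3, intervalIntegral.integral_add hg2 ((i1.const_mul _).add (i2.const_mul _)),
        intervalIntegral.integral_add (i1.const_mul _) (i2.const_mul _),
        intervalIntegral.integral_const_mul, intervalIntegral.integral_const_mul]
    rw [hexp] at hobj
    linarith
  -- conclude D = 0 and N = 0
  have hNnonneg : 0 ≤ N := by
    rw [hNdef]
    apply intervalIntegral.integral_nonneg h11
    intro t _; exact sq_nonneg _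
  have hD0 : D = 0 := quad_zero hNnonneg key
  have hQvint : Integrable (fun t => Q t * v t) μ :=
    hvJ.bdd_mul hQmeas.aestronglyMeasurable hQbd
  have hN0 : N = 0 := by
    have e4 : (fun t => v t ^ 2) = fun t => g t * v t - Q t * v t := by
      funext t; simp only [hvdef]; ring
    rw [hNJ, e4, integral_sub hgv hQvint, ← hDJ, hD0]
    have e5 : (fun t => Q t * v t)
        = fun t => ∑ i : Fin m, α i * (qf x (i:ℕ) t * v t) := by
      funext t
      simp only [hQdef, Finset.sum_mul]
      exact Finset.sum_congr rfl fun i _ => by ring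
    rw [e5, integral_finset_sum
      (f := fun (i : Fin m) (t : ℝ) => α i * (qf x (i:ℕ) t * v t))
      Finset.univ (fun i _ => ((hqv i).const_mul _))]
    have : ∀ i : Fin m, (∫ t, α i * (qf x (i:ℕ) t * v t) ∂μ) = 0 := by
      intro i
      rw [MeasureTheory.integral_const_mul, hQv i, mul_zero]
    simp only [this]
    simp
  -- v = 0 a.e.
  have hv0 : ∀ᵐ t ∂μ, v t = 0 := by
    have hNμ : (∫ t, v t ^ 2 ∂μ) = 0 := by rw [← hNJ, hN0]
    have hae := (integral_eq_zero_iff_of_nonneg_ae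
      (Filter.Eventually.of_forall fun t => sq_nonneg _) hv2J).1 hNμ
    filter_upwards [hae] with t ht
    exact sq_eq_zero_iff.mp ht
  have hgQ : ∀ᵐ t ∂(volume.restrict (Set.Ioo (-1:ℝ) 1)), g t = Q t := by
    have h1 : ∀ᵐ t ∂μ, g t = Q t := by
      filter_upwards [hv0] with t ht
      have : g t - Q t = 0 := ht
      linarith
    rw [hμdef] at h1
    exact ae_restrict_of_ae_restrict_of_subset Set.Ioo_subset_Ioc_self h1
  -- final assembly
  refine ⟨Pa m α, -(∑ i : Fin m, α i * Ik (i:ℕ)), ?_, ?_, ?_, ?_⟩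
  · apply Polynomial.natDegree_sum_le_of_forall_le
    intro i _
    calc (Polynomial.C (α i / ((i:ℕ)+1)) * (1 - Polynomial.X ^ ((i:ℕ)+1))).natDegree
        ≤ ((1:Polynomial ℝ) - Polynomial.X ^ ((i:ℕ)+1)).natDegree := Polynomial.natDegree_C_mul_le _ _
      _ ≤ max (1:Polynomial ℝ).natDegree ((Polynomial.X ^ ((i:ℕ)+1) : Polynomial ℝ)).natDegree :=
          Polynomial.natDegree_sub_le _ _
      _ ≤ m := by
          rw [Polynomial.natDegree_one, Polynomial.natDegree_X_pow]
          simp only [max_le_iff]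
          exact ⟨Nat.zero_le m, i.isLt⟩
  · filter_upwards [hgQ] with t ht
    rw [ht, Pa_eval]
    simp only [hQdef]
    calc ∑ i : Fin m, α i * qf x (i:ℕ) t
        = ∑ i : Fin m, (α i * ((1 - t ^ ((i:ℕ)+1)) / ((i:ℕ)+1))
            - (α i * Ik (i:ℕ)) * (if t ∈ Set.Ioo (-1:ℝ) x then 1 else 0)) := by
          apply Finset.sum_congr rfl
          intro i _
          unfold qf
          push_cast
          ring
      _ = (∑ i : Fin m, α i * ((1 - t ^ ((i:ℕ)+1)) / ((i:ℕ)+1)))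
            - (∑ i : Fin m, α i * Ik (i:ℕ)) * (if t ∈ Set.Ioo (-1:ℝ) x then 1 else 0) := by
          rw [Finset.sum_sub_distrib, ← Finset.sum_mul]
      _ = _ := by ring
  · rw [Pa_eval]
    have : ∀ i : Fin m, α i * ((1 - (-1:ℝ) ^ ((i:ℕ)+1)) / ((i:ℕ)+1)) = α i * Ik (i:ℕ) := by
      intro i; unfold Ik; norm_num
    rw [Finset.sum_congr rfl fun i _ => this i]
    ring
  · rw [Pa_eval]
    simp
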